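/- The function u(x,t) = sin(2·arctan(e^{−t}·tan(x/2)))/sin(x) solves the variable-coefficient transport equation u_t + (sin(x)·u)_x = 0 on the region where sin(x) ≠ 0. -/

import Mathlib

lemma sin_two_arctan' (w : ℝ) : Real.sin (2 * Real.arctan w) = 2 * w / (1 + w^2) := by
  rw [Real.sin_two_mul, Real.sin_arctan, Real.cos_arctan]
  have h0 : (0:ℝ) < 1 + w^2 := by positivity
  have hs : Real.sqrt (1 + w^2) * Real.sqrt (1 + w^2) = 1 + w^2 :=
    Real.mul_self_sqrt h0.le
  have hne : Real.sqrt (1 + w^2) ≠ 0 := by positivity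
  field_simp
  rw [Real.sq_sqrt h0.le]

/-- `u(x,t) = sin(2 arctan(e^{-t} tan(x/2)))/sin(x)` solves
`u_t + (sin(x) u)_x = 0` on `(0, π)`. -/
theorem exact_solution_variable_coefficient_transport :
    ∀ x ∈ Set.Ioo (0 : ℝ) Real.pi, ∀ t : ℝ,
      deriv (fun s => Real.sin (2 * Real.arctan (Real.exp (-s) * Real.tan (x / 2))) / Real.sin x) t
        + deriv (fun y =>
            Real.sin y *
              (Real.sin (2 * Real.arctan (Real.exp (-t) * Real.tan (y / 2))) / Real.sin y)) x
      = 0 := by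
  rintro x ⟨hx0, hxpi⟩ t
  have hsinx : Real.sin x ≠ 0 := ne_of_gt (Real.sin_pos_of_pos_of_lt_pi hx0 hxpi)
  have hhalf0 : 0 < x / 2 := by linarith
  have hhalfpi : x / 2 < Real.pi / 2 := by linarith
  have hch : Real.cos (x/2) ≠ 0 :=
    ne_of_gt (Real.cos_pos_of_mem_Ioo ⟨by linarith [Real.pi_pos], hhalfpi⟩)
  set c := Real.tan (x/2) with hc
  set a := Real.exp (-t) with ha
  have hapos : 0 < a := Real.exp_pos _
  -- first derivative
  have h1 : HasDerivAt (fun s => Real.exp (-s) * c) (-(a * c)) t := by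
    have : HasDerivAt (fun s : ℝ => Real.exp (-s)) (Real.exp (-t) * (-1)) t :=
      (Real.hasDerivAt_exp (-t)).comp t ((hasDerivAt_neg t))
    simpa [ha] using this.mul_const c
  have hden1 : (1 : ℝ) + (a*c)^2 ≠ 0 := by positivity
  have hD1 : HasDerivAt (fun s => Real.sin (2 * Real.arctan (Real.exp (-s) * Real.tan (x / 2))) / Real.sin x)
      (((2 * (-(a*c))) * (1 + (a*c)^2) - (2 * (a*c)) * (2 * (a*c) * (-(a*c)))) / (1 + (a*c)^2)^2 / Real.sin x) t := by
    have hnum : HasDerivAt (fun s => 2 * (Real.exp (-s) * c)) (2 * (-(a*c))) t := h1.const_mul 2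
    have hd : HasDerivAt (fun s => 1 + (Real.exp (-s) * c)^2) (2 * (a*c) * (-(a*c))) t := by
      simpa using ((h1.pow 2).const_add 1)
    have := (hnum.div hd (by simpa [ha] using hden1)).div_const (Real.sin x)
    have heq : (fun s => Real.sin (2 * Real.arctan (Real.exp (-s) * Real.tan (x / 2))) / Real.sin x)
        = fun s => (2 * (Real.exp (-s) * c)) / (1 + (Real.exp (-s) * c)^2) / Real.sin x := by
      funext s; rw [sin_two_arctan']
    rw [heq]
    simpa [ha] using this
  rw [hD1.deriv]
  -- second derivative
  have hmem : Set.Ioo (0:ℝ) Real.pi ∈ nhds x := (isOpen_Ioo).mem_nhds ⟨hx0, hxpi⟩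
  have hEq : (fun y => Real.sin y * (Real.sin (2 * Real.arctan (Real.exp (-t) * Real.tan (y / 2))) / Real.sin y))
      =ᶠ[nhds x] fun y => 2 * (a * Real.tan (y/2)) / (1 + (a * Real.tan (y/2))^2) := by
    filter_upwards [hmem] with y hy
    have hsy : Real.sin y ≠ 0 := ne_of_gt (Real.sin_pos_of_pos_of_lt_pi hy.1 hy.2)
    rw [sin_two_arctan', mul_div_assoc']
    rw [mul_comm (Real.sin y), mul_div_assoc, div_self hsy, mul_one]
  rw [hEq.deriv_eq]
  have htan : HasDerivAt (fun y => Real.tan (y/2)) (1 / Real.cos (x/2)^2 * (1/2)) x := by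
    have := (Real.hasDerivAt_tan hch).comp x ((hasDerivAt_id x).div_const 2)
    simpa [Function.comp_def] using this
  have hw : HasDerivAt (fun y => a * Real.tan (y/2)) (a * (1 / Real.cos (x/2)^2 * (1/2))) x :=
    htan.const_mul a
  have hden2 : (1 : ℝ) + (a * c)^2 ≠ 0 := hden1
  have hD2 : HasDerivAt (fun y => 2 * (a * Real.tan (y/2)) / (1 + (a * Real.tan (y/2))^2))
      (((2 * (a * (1 / Real.cos (x/2)^2 * (1/2)))) * (1 + (a*c)^2)
        - (2 * (a*c)) * (2 * (a*c) * (a * (1 / Real.cos (x/2)^2 * (1/2))))) / (1 + (a*c)^2)^2) x := by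
    have hnum : HasDerivAt (fun y => 2 * (a * Real.tan (y/2))) (2 * (a * (1 / Real.cos (x/2)^2 * (1/2)))) x :=
      hw.const_mul 2
    have hd : HasDerivAt (fun y => 1 + (a * Real.tan (y/2))^2) (2 * (a*c) * (a * (1 / Real.cos (x/2)^2 * (1/2)))) x := by
      simpa [hc] using ((hw.pow 2).const_add 1)
    simpa [hc, Pi.div_def] using hnum.div hd (by simpa [hc] using hden2)
  rw [hD2.deriv]
  -- algebra
  have hsin2 : Real.sin x = 2 * Real.sin (x/2) * Real.cos (x/2) := by
    have : Real.sin (2 * (x/2)) = 2 * Real.sin (x/2) * Real.cos (x/2) := Real.sin_two_mul _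
    simpa [mul_div_cancel₀] using this
  have htn : c = Real.sin (x/2) / Real.cos (x/2) := Real.tan_eq_sin_div_cos _
  have hpyth : Real.sin (x/2)^2 + Real.cos (x/2)^2 = 1 := Real.sin_sq_add_cos_sq _
  set sh := Real.sin (x/2)
  set ch := Real.cos (x/2)
  rw [hsin2, htn] at *
  have hsh : sh ≠ 0 := by
    have : 0 < sh := Real.sin_pos_of_pos_of_lt_pi hhalf0 (by linarith)
    exact ne_of_gt this
  have h2 : (1 : ℝ) + (a * (sh/ch))^2 ≠ 0 := by positivity
  field_simp
  ring_nf
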